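/- Soundness of Regression: let P = ⟨A,O,I,G⟩ be a planning problem and c a regression solution of P. Then c is also a progression solution of P, i.e., ⊥ ∉ Φ*(c,σ_I) and Φ*(c,σ_I) ⊆ ext(δ_G). -/

import Mathlib

open scoped Classical

/-! ## States -/

/-- A state: a pair of finite sets of fluents (true ones and false ones).
Used for both a-states (when the two sets are disjoint, see `St.OK`) and
p-states (partial states). -/
structure St (V : Type*) where
  T : Finset V
  F : Finset V
deriving DecidableEq

variable {V : Type*} [DecidableEq V]

/-- A pair of sets of fluents is a genuine (a- or p-) state when the sets are disjoint. -/
def St.OK (s : St V) : Prop := Disjoint s.T s.F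

/-- The extension set `ext(δ)` of a p-state `δ`: all a-states extending it. -/
def exts (δ : St V) : Set (St V) := {σ | σ.OK ∧ δ.T ⊆ σ.T ∧ δ.F ⊆ σ.F}

/-- `δ'` is a partial extension of `δ`. -/
def pext (δ δ' : St V) : Prop := δ.T ⊆ δ'.T ∧ δ.F ⊆ δ'.F

/-! ## Actions -/

/-- A non-sensing action: precondition literals (positive part `preP`, negative part
`preN`), and disjoint add and delete lists. -/
structure NAct (V : Type*) where
  preP : Finset V
  preN : Finset V
  add : Finset V
  del : Finset V
  hdisj : Disjoint add del

/-- A sensing action: precondition literals and a set of sensed fluents not occurring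
in the precondition. -/
structure SAct (V : Type*) where
  preP : Finset V
  preN : Finset V
  sens : Finset V
  hsens : Disjoint sens (preP ∪ preN)

/-- Executability of a non-sensing action in an a-state. -/
def NAct.execIn (a : NAct V) (σ : St V) : Prop := a.preP ⊆ σ.T ∧ a.preN ⊆ σ.F

/-- Executability of a sensing action in an a-state. -/
def SAct.execIn (a : SAct V) (σ : St V) : Prop := a.preP ⊆ σ.T ∧ a.preN ⊆ σ.F

/-- The result of executing a non-sensing action `a` in an a-state `σ`. -/
def NAct.res (a : NAct V) (σ : St V) : St V :=
  ⟨σ.T \ a.del ∪ a.add, σ.F \ a.add ∪ a.del⟩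

/-- The transition function `Φ` for a non-sensing action (`none` plays the role of `⊥`). -/
def PhiN (a : NAct V) (σ : St V) : Set (Option (St V)) :=
  {x | (a.execIn σ ∧ x = some (a.res σ)) ∨ (¬ a.execIn σ ∧ x = none)}

/-- The possible results of executing a sensing action `a` in an a-state `σ`. -/
def sres (a : SAct V) (σ : St V) : Set (St V) :=
  {σ' | σ'.OK ∧ σ.T ⊆ σ'.T ∧ σ.F ⊆ σ'.F ∧
    (σ'.T \ σ.T) ∪ (σ'.F \ σ.F) = a.sens \ (σ.T ∪ σ.F)}

/-- The transition function `Φ` for a sensing action (`none` plays the role of `⊥`). -/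
def PhiS (a : SAct V) (σ : St V) : Set (Option (St V)) :=
  {x | (a.execIn σ ∧ ∃ σ' ∈ sres a σ, x = some σ') ∨ (¬ a.execIn σ ∧ x = none)}

/-! ## Regression for single actions -/

/-- Applicability of a non-sensing action `a` in a p-state `δ`. -/
def AppN (a : NAct V) (δ : St V) : Prop :=
  ((a.add ∩ δ.T).Nonempty ∨ (a.del ∩ δ.F).Nonempty) ∧
  Disjoint a.add δ.F ∧ Disjoint a.del δ.T ∧
  a.preP ∩ δ.F ⊆ a.del ∧ a.preN ∩ δ.T ⊆ a.add

/-- Regression of a non-sensing action over a p-state (`none` is `⊥`). -/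
noncomputable def RegressN (a : NAct V) (δ : St V) : Option (St V) :=
  if AppN a δ then some ⟨δ.T \ a.add ∪ a.preP, δ.F \ a.del ∪ a.preN⟩ else none

/-- `X` is a sensed set of the set `Δ` of (distinct) p-states with respect to the sensing
action `a`, i.e. `X` is a nonempty subset of `Sens_a` and `Δ` is proper with respect to `X`. -/
def SensedSet (a : SAct V) (Δ : Finset (St V)) (X : Finset V) : Prop :=
  X.Nonempty ∧ X ⊆ a.sens ∧
  (∀ δ ∈ Δ, a.sens ⊆ δ.T ∪ δ.F) ∧
  Δ.card = 2 ^ X.card ∧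
  (∀ P Q : Finset V, Disjoint P Q → P ∪ Q = X →
    ∃! δ, δ ∈ Δ ∧ δ.T ∩ X = P ∧ δ.F ∩ X = Q) ∧
  (∀ δ ∈ Δ, ∀ δ' ∈ Δ, δ ≠ δ' → δ.T \ X = δ'.T \ X ∧ δ.F \ X = δ'.F \ X)

/-- Strong applicability of a sensing action in a set of p-states. -/
def StrongApp (a : SAct V) (Δ : Finset (St V)) : Prop :=
  (∃ X, SensedSet a Δ X) ∧ ∀ δ ∈ Δ, Disjoint a.preP δ.F ∧ Disjoint a.preN δ.T

/-- Applicability of a sensing action in a set of p-states: some family of partial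
extensions of the members of `Δ` makes `a` strongly applicable, and `Sens_a` is known
in every member of `Δ`. -/
def AppS (a : SAct V) (Δ : Finset (St V)) : Prop :=
  (∃ e : St V → St V, (∀ δ ∈ Δ, pext δ (e δ)) ∧ Set.InjOn e ↑Δ ∧ StrongApp a (Δ.image e)) ∧
  (∀ δ ∈ Δ, a.sens ⊆ δ.T ∪ δ.F)

/-- `S_{a,Δ}`: the sensed set of a family of partial extensions of `Δ`
(well-defined by the "unique sensed set" lemma). -/
noncomputable def SaD (a : SAct V) (Δ : Finset (St V)) : Finset V :=
  if h : ∃ X, ∃ e : St V → St V, (∀ δ ∈ Δ, pext δ (e δ)) ∧ Set.InjOn e ↑Δ ∧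
      SensedSet a (Δ.image e) X
  then h.choose else ∅

/-- Regression of a sensing action over a set of p-states (`none` is `⊥`). -/
noncomputable def RegressS (a : SAct V) (Δ : Finset (St V)) : Option (St V) :=
  if AppS a Δ then
    some ⟨(Δ.sup St.T) \ SaD a Δ ∪ a.preP, (Δ.sup St.F) \ SaD a Δ ∪ a.preN⟩
  else none

/-! ## Formulas (conjunctions of fluent literals) -/

/-- A conjunction of fluent literals, given by its positive and negative fluents. -/
abbrev Form (V : Type*) := Finset V × Finset V

/-- A conjunction of literals is consistent if no fluent occurs both positively and
negatively. -/
def Consistent (φ : Form V) : Prop := Disjoint φ.1 φ.2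

/-- Two conjunctions of literals are mutually exclusive. -/
def MutEx (φ ψ : Form V) : Prop := ¬ Disjoint φ.1 ψ.2 ∨ ¬ Disjoint ψ.1 φ.2

/-- A conjunction of literals holds in an a-state. -/
def holds (φ : Form V) (σ : St V) : Prop := φ.1 ⊆ σ.T ∧ φ.2 ⊆ σ.F

/-- `BIN S`: all binary representations of the nonempty set of fluents `S`. -/
def BIN (S : Finset V) : Finset (Form V) :=
  S.powerset.image (fun P => (P, S \ P))

/-- The set of conjunctions `χ` spans over the set of fluents `S`. -/
def spans (χ : Finset (Form V)) (S : Finset V) : Prop :=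
  ∃ φ : Form V, Consistent φ ∧ φ ∉ χ ∧ Disjoint S (φ.1 ∪ φ.2) ∧
    χ = (BIN S).image (fun ψ => (φ.1 ∪ ψ.1, φ.2 ∪ ψ.2))

/-! ## Conditional plans -/

/-- Conditional plans. -/
inductive Plan (V : Type*) where
  | empty : Plan V
  | action : NAct V → Plan V
  | pcase : SAct V → List (Form V × Plan V) → Plan V
  | seq : Plan V → Plan V → Plan V

/-- Well-formedness of a conditional plan: in every case plan the guards are
consistent and pairwise mutually exclusive conjunctions of literals. -/
inductive Plan.WF : Plan V → Prop
  | empty : Plan.WF .empty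
  | action (a : NAct V) : Plan.WF (.action a)
  | pcase (a : SAct V) (bs : List (Form V × Plan V)) :
      (∀ b ∈ bs, Consistent b.1) →
      bs.Pairwise (fun b b' => MutEx b.1 b'.1) →
      (∀ b ∈ bs, Plan.WF b.2) → Plan.WF (.pcase a bs)
  | seq {c₁ c₂ : Plan V} : Plan.WF c₁ → Plan.WF c₂ → Plan.WF (.seq c₁ c₂)

/-- The graph of the extended transition function `Φ*`:
`PhiStarR c x y` means `y ∈ Φ*(c, x)` (where `none` is `⊥`). -/
inductive PhiStarR : Plan V → Option (St V) → Option (St V) → Prop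
  | bot (c : Plan V) : PhiStarR c none none
  | empty (σ : St V) : PhiStarR .empty (some σ) (some σ)
  | action (a : NAct V) (σ : St V) (x : Option (St V)) :
      x ∈ PhiN a σ → PhiStarR (.action a) (some σ) x
  | caseBot (a : SAct V) (bs : List (Form V × Plan V)) (σ : St V) :
      none ∈ PhiS a σ → PhiStarR (.pcase a bs) (some σ) none
  | caseHit (a : SAct V) (bs : List (Form V × Plan V)) (σ σ' : St V)
      (φ : Form V) (p : Plan V) (x : Option (St V)) :
      some σ' ∈ PhiS a σ → (φ, p) ∈ bs → holds φ σ' →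
      PhiStarR p (some σ') x → PhiStarR (.pcase a bs) (some σ) x
  | caseMiss (a : SAct V) (bs : List (Form V × Plan V)) (σ σ' : St V) :
      some σ' ∈ PhiS a σ → (∀ b ∈ bs, ¬ holds b.1 σ') →
      PhiStarR (.pcase a bs) (some σ) none
  | seq (c₁ c₂ : Plan V) (σ : St V) (y x : Option (St V)) :
      PhiStarR c₁ (some σ) y → PhiStarR c₂ y x → PhiStarR (.seq c₁ c₂) (some σ) x

/-- `R(cᵢ,δ)` from the definition of `Regress*` on case plans (the consistent case). -/
def Rform (φ : Form V) (st : St V) : St V := ⟨st.T ∪ φ.1, st.F ∪ φ.2⟩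

/-- The graph of the extended regression function `Regress*`:
`RegStarR c x y` means `Regress*(c, x) = y` (where `none` is `⊥`). -/
inductive RegStarR : Plan V → Option (St V) → Option (St V) → Prop
  | bot (c : Plan V) : RegStarR c none none
  | empty (δ : St V) : RegStarR .empty (some δ) (some δ)
  | action (a : NAct V) (δ : St V) : RegStarR (.action a) (some δ) (RegressN a δ)
  | caseBot (a : SAct V) (bs : List (Form V × Plan V)) (δ : St V)
      (b : Form V × Plan V) :
      b ∈ bs → RegStarR b.2 (some δ) none → RegStarR (.pcase a bs) (some δ) none
  | caseRBot (a : SAct V) (bs : List (Form V × Plan V)) (δ : St V)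
      (b : Form V × Plan V) (st : St V) :
      b ∈ bs → RegStarR b.2 (some δ) (some st) →
      ¬ (Disjoint b.1.1 st.F ∧ Disjoint b.1.2 st.T) →
      RegStarR (.pcase a bs) (some δ) none
  | caseGo (a : SAct V) (bs : List (Form V × Plan V)) (δ : St V)
      (r : Form V × Plan V → St V) :
      (∀ b ∈ bs, RegStarR b.2 (some δ) (some (r b))) →
      (∀ b ∈ bs, Disjoint b.1.1 (r b).F ∧ Disjoint b.1.2 (r b).T) →
      RegStarR (.pcase a bs) (some δ)
        (RegressS a ((bs.map (fun b => Rform b.1 (r b))).toFinset))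
  | seq (c₁ c₂ : Plan V) (δ : St V) (y x : Option (St V)) :
      RegStarR c₂ (some δ) y → RegStarR c₁ y x → RegStarR (.seq c₁ c₂) (some δ) x

/-! ## Subplans, redundancy, regressability -/

/-- One editing step producing a "smaller" plan: removing an instance of a
non-sensing action, removing a case plan or one of its branches, or replacing a
sensing action by a sub sensing action; possibly deep inside the plan. -/
inductive Edit : Plan V → Plan V → Prop
  | dropAct (a : NAct V) : Edit (.action a) .empty
  | dropCase (a : SAct V) (bs : List (Form V × Plan V)) : Edit (.pcase a bs) .empty
  | dropBranch (a : SAct V) (b : Form V × Plan V) (l₁ l₂ : List (Form V × Plan V)) :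
      Edit (.pcase a (l₁ ++ b :: l₂)) (.pcase a (l₁ ++ l₂))
  | subSense (a a' : SAct V) (bs : List (Form V × Plan V)) :
      a'.preP = a.preP → a'.preN = a.preN → a'.sens ⊂ a.sens →
      Edit (.pcase a bs) (.pcase a' bs)
  | inBranch (a : SAct V) (φ : Form V) (p p' : Plan V) (l₁ l₂ : List (Form V × Plan V)) :
      Edit p p' →
      Edit (.pcase a (l₁ ++ (φ, p) :: l₂)) (.pcase a (l₁ ++ (φ, p') :: l₂))
  | seqL {c₁ c₁' : Plan V} (c₂ : Plan V) : Edit c₁ c₁' → Edit (.seq c₁ c₂) (.seq c₁' c₂)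
  | seqR {c₂ c₂' : Plan V} (c₁ : Plan V) : Edit c₂ c₂' → Edit (.seq c₁ c₂) (.seq c₁ c₂')

/-- `c'` is a subplan of `c`. -/
def IsSubplan (c' c : Plan V) : Prop := Relation.TransGen Edit c c'

/-- `⊥ ∉ Φ*(c,σ)` and `Φ*(c,σ) ⊆ ext(δ)`. -/
def Achieves (c : Plan V) (σ δ : St V) : Prop :=
  ∀ x, PhiStarR c (some σ) x → ∃ σ' ∈ exts δ, x = some σ'

/-- `c` is redundant with respect to `(σ,δ)`. -/
def Redundant (c : Plan V) (σ δ : St V) : Prop :=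
  Achieves c σ δ ∧ ∃ c', IsSubplan c' c ∧ Achieves c' σ δ

/-- A case plan `a;case(φ₁→c₁,…,φₙ→cₙ)` is possibly regressable. -/
def PRCase (a : SAct V) (bs : List (Form V × Plan V)) : Prop :=
  (∃ S : Finset V, S.Nonempty ∧ S ⊆ a.sens ∧ spans (bs.map Prod.fst).toFinset S) ∧
  ∀ b ∈ bs, a.sens ⊆ b.1.1 ∪ b.1.2

/-- Every case plan occurring in `c` is possibly regressable. -/
inductive AllCasesPR : Plan V → Prop
  | empty : AllCasesPR .empty
  | action (a : NAct V) : AllCasesPR (.action a)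
  | pcase (a : SAct V) (bs : List (Form V × Plan V)) :
      PRCase a bs → (∀ b ∈ bs, AllCasesPR b.2) → AllCasesPR (.pcase a bs)
  | seq {c₁ c₂ : Plan V} : AllCasesPR c₁ → AllCasesPR c₂ → AllCasesPR (.seq c₁ c₂)

/-- `c` is regressable with respect to `(σ,δ)`. -/
def Regressable (c : Plan V) (σ δ : St V) : Prop :=
  AllCasesPR c ∧ Achieves c σ δ ∧ ¬ Redundant c σ δ

/-! ## Normalized plans -/

/-- Normalized conditional plans: a sequence of non-sensing actions followed by
either nothing or a case plan all of whose branches are normalized. -/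
inductive Normalized : Plan V → Prop
  | empty : Normalized .empty
  | single (a : NAct V) : Normalized (.action a)
  | pcase (a : SAct V) (bs : List (Form V × Plan V)) :
      (∀ b ∈ bs, Normalized b.2) → Normalized (.pcase a bs)
  | cons (a : NAct V) {c : Plan V} : Normalized c → Normalized (.seq (.action a) c)

/-- `normSeq c k` normalizes the plan `c ; k`, assuming `k` is already normalized. -/
def normSeq : Plan V → Plan V → Plan V
  | .empty, k => k
  | .action a, k => .seq (.action a) k
  | .pcase a bs, k => .pcase a (bs.attach.map (fun b => (b.1.1, normSeq b.1.2 k)))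
  | .seq c₁ c₂, k => normSeq c₁ (normSeq c₂ k)
termination_by c _ => sizeOf c
decreasing_by
  all_goals simp_wf
  all_goals first
    | omega
    | (have h := List.sizeOf_lt_of_mem b.2
       obtain ⟨⟨f, p⟩, hb⟩ := b
       simp at *
       omega)

/-- `normalized(c)`. -/
def normalizePlan (c : Plan V) : Plan V := normSeq c .empty

/-! ## Sequences of non-sensing actions -/

/-- The conditional plan `a₁;…;aₙ;k` determined by a list of non-sensing actions. -/
def seqP : List (NAct V) → Plan V → Plan V
  | [], k => k
  | a :: t, k => .seq (.action a) (seqP t k)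

instance (a : NAct V) (σ : St V) : Decidable (a.execIn σ) :=
  inferInstanceAs (Decidable (a.preP ⊆ σ.T ∧ a.preN ⊆ σ.F))

/-- `Φ*` specialized to a sequence of non-sensing actions, as a function
(`none` is `⊥`). -/
def runSeq : List (NAct V) → St V → Option (St V)
  | [], σ => some σ
  | a :: t, σ => if a.execIn σ then runSeq t (a.res σ) else none

/-- `Regress*` specialized to a sequence of non-sensing actions, as a function
(`none` is `⊥`). -/
noncomputable def regSeq : List (NAct V) → St V → Option (St V)
  | [], δ => some δ
  | a :: t, δ => match regSeq t δ with
      | none => none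
      | some δ' => RegressN a δ'

/-- For a sequence of non-sensing actions: `⊥ ∉ Φ*(l,σ)` and `Φ*(l,σ) ⊆ ext(δ)`. -/
def SeqAchieves (l : List (NAct V)) (σ δ : St V) : Prop :=
  ∃ σ', runSeq l σ = some σ' ∧ σ' ∈ exts δ

/-- Redundancy of a sequence of non-sensing actions with respect to `(σ,δ)`
(a subplan of a sequence is a proper sublist of it). -/
def SeqRedundant (l : List (NAct V)) (σ δ : St V) : Prop :=
  SeqAchieves l σ δ ∧ ∃ l', List.Sublist l' l ∧ l' ≠ l ∧ SeqAchieves l' σ δ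

/-- Regressability of a sequence of non-sensing actions with respect to `(σ,δ)`. -/
def SeqRegressable (l : List (NAct V)) (σ δ : St V) : Prop :=
  SeqAchieves l σ δ ∧ ¬ SeqRedundant l σ δ

/-! ## The regression search algorithm -/

/-- The sets of plan-state pairs reachable by the algorithm `Solve(P)` from the
initial set `{⟨[], δ_G⟩}` using steps 4.1 (non-sensing regression) and 4.2
(sensing regression). -/
inductive Reach (δG : St V) : Set (Plan V × St V) → Prop
  | init : Reach δG {(Plan.empty, δG)}
  | step1 {N : Set (Plan V × St V)} (c : Plan V) (δ : St V) (a : NAct V) (δ' : St V) :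
      Reach δG N → (c, δ) ∈ N → RegressN a δ = some δ' →
      (∀ p ∈ N, p.2 ≠ δ') →
      Reach δG (insert (Plan.seq (.action a) c, δ') N)
  | step2 {N : Set (Plan V × St V)} (a : SAct V) (bs : List (Form V × Plan V))
      (ds : Form V × Plan V → St V) (S : Finset V) (δ' : St V) :
      Reach δG N →
      (∀ b ∈ bs, (b.2, ds b) ∈ N) →
      S.Nonempty → S ⊆ a.sens → spans (bs.map Prod.fst).toFinset S →
      (∀ b ∈ bs, (Rform b.1 (ds b)).OK) →
      RegressS a ((bs.map (fun b => Rform b.1 (ds b))).toFinset) = some δ' →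
      (∀ p ∈ N, p.2 ≠ δ') →
      Reach δG (insert (Plan.pcase a bs, δ') N)

/-- `N` is saturated: no step of type 4.1 or 4.2 can produce a p-state not
already occurring in `N`. -/
def Saturated (N : Set (Plan V × St V)) : Prop :=
  (∀ (c : Plan V) (δ : St V) (a : NAct V) (δ' : St V),
      (c, δ) ∈ N → RegressN a δ = some δ' → ∃ p ∈ N, p.2 = δ') ∧
  (∀ (a : SAct V) (bs : List (Form V × Plan V)) (ds : Form V × Plan V → St V)
      (S : Finset V) (δ' : St V),
      (∀ b ∈ bs, (b.2, ds b) ∈ N) →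
      S.Nonempty → S ⊆ a.sens → spans (bs.map Prod.fst).toFinset S →
      (∀ b ∈ bs, (Rform b.1 (ds b)).OK) →
      RegressS a ((bs.map (fun b => Rform b.1 (ds b))).toFinset) = some δ' →
      ∃ p ∈ N, p.2 = δ')


theorem regStarR_sound {c : Plan V} {i o : Option (St V)} (h : RegStarR c i o) :
    c.WF → ∀ δG δf : St V, i = some δG → o = some δf →
    ∀ σ, σ ∈ exts δf → ∀ x, PhiStarR c (some σ) x → ∃ σ' ∈ exts δG, x = some σ' := by
  induction h with
  | bot c => intro _ δG δf hi ho; exact absurd ho (by simp)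
  | empty δ =>
      intro _ δG δf hi ho σ hσ x hx
      cases hi; cases ho
      cases hx
      exact ⟨σ, hσ, rfl⟩
  | action a δ =>
      intro _ δG δf hi ho σ hσ x hx
      cases hi
      rw [RegressN] at ho
      split_ifs at ho with hA
      injection ho with ho; subst ho
      obtain ⟨hOK, hT, hF⟩ := hσ
      have hexec : a.execIn σ :=
        ⟨(Finset.subset_union_right).trans hT, (Finset.subset_union_right).trans hF⟩
      cases hx
      rename_i hmem
      rcases hmem with ⟨_, rfl⟩ | ⟨hne, _⟩
      · refine ⟨a.res σ, ⟨?_, ?_, ?_⟩, rfl⟩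
        · rw [St.OK, Finset.disjoint_left]
          intro f hf1 hf2
          simp only [NAct.res, Finset.mem_union, Finset.mem_sdiff] at hf1 hf2
          rcases hf1 with ⟨hfT, hfd⟩ | hfa
          · rcases hf2 with ⟨hfF, _⟩ | hfd'
            · exact (Finset.disjoint_left.1 hOK hfT) hfF
            · exact hfd hfd'
          · rcases hf2 with ⟨_, hfa'⟩ | hfd'
            · exact hfa' hfa
            · exact (Finset.disjoint_left.1 a.hdisj hfa) hfd'
        · intro f hf
          simp only [NAct.res, Finset.mem_union, Finset.mem_sdiff]
          by_cases hfa : f ∈ a.add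
          · exact Or.inr hfa
          · refine Or.inl ⟨hT (Finset.mem_union_left _ (Finset.mem_sdiff.2 ⟨hf, hfa⟩)), ?_⟩
            exact fun hfd => (Finset.disjoint_left.1 hA.2.2.1 hfd) hf
        · intro f hf
          simp only [NAct.res, Finset.mem_union, Finset.mem_sdiff]
          by_cases hfd : f ∈ a.del
          · exact Or.inr hfd
          · refine Or.inl ⟨hF (Finset.mem_union_left _ (Finset.mem_sdiff.2 ⟨hf, hfd⟩)), ?_⟩
            exact fun hfa => (Finset.disjoint_left.1 hA.2.1 hfa) hf
      · exact absurd hexec hne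
  | caseBot a bs δ b hb hreg ih => intro _ δG δf hi ho; exact absurd ho (by simp)
  | caseRBot a bs δ b st hb hreg hnd ih => intro _ δG δf hi ho; exact absurd ho (by simp)
  | caseGo a bs δ r h1 h2 ih =>
      intro hwf δG δf hi ho σ hσ x hx
      cases hi
      set Δ := (bs.map (fun b => Rform b.1 (r b))).toFinset with hΔ
      rw [RegressS] at ho
      split_ifs at ho with hApp
      injection ho with ho; subst ho
      obtain ⟨⟨e₀, he₀, hinj₀, hSA₀⟩, hknown⟩ := hApp
      have hex : ∃ X, ∃ e : St V → St V, (∀ d ∈ Δ, pext d (e d)) ∧ Set.InjOn e ↑Δ ∧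
          SensedSet a (Δ.image e) X := by
        obtain ⟨X₀, hX₀⟩ := hSA₀.1
        exact ⟨X₀, e₀, he₀, hinj₀, hX₀⟩
      have hSaD : ∃ e : St V → St V, (∀ d ∈ Δ, pext d (e d)) ∧ Set.InjOn e ↑Δ ∧
          SensedSet a (Δ.image e) (SaD a Δ) := by
        rw [SaD, dif_pos hex]; exact hex.choose_spec
      obtain ⟨e, hpe, hinj, hXne, hXsens, _, _, hEO, _⟩ := hSaD
      set X := SaD a Δ with hXdef
      obtain ⟨hOK, hT, hF⟩ := hσ
      have hmemΔ : ∀ b ∈ bs, Rform b.1 (r b) ∈ Δ := fun b hb =>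
        List.mem_toFinset.2 (List.mem_map.2 ⟨b, hb, rfl⟩)
      have hsupT : ∀ {f : V}, ∀ b ∈ bs, f ∈ (Rform b.1 (r b)).T → f ∉ X → f ∈ σ.T := by
        intro f b hb hf hfx
        have hsub : (Rform b.1 (r b)).T ⊆ Δ.sup St.T := Finset.le_sup (hmemΔ b hb)
        exact hT (Finset.mem_union_left _ (Finset.mem_sdiff.2 ⟨hsub hf, hfx⟩))
      have hsupF : ∀ {f : V}, ∀ b ∈ bs, f ∈ (Rform b.1 (r b)).F → f ∉ X → f ∈ σ.F := by
        intro f b hb hf hfx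
        have hsub : (Rform b.1 (r b)).F ⊆ Δ.sup St.F := Finset.le_sup (hmemΔ b hb)
        exact hF (Finset.mem_union_left _ (Finset.mem_sdiff.2 ⟨hsub hf, hfx⟩))
      have hexec : a.execIn σ :=
        ⟨(Finset.subset_union_right).trans hT, (Finset.subset_union_right).trans hF⟩
      have hsresKnown : ∀ σ' ∈ sres a σ, a.sens ⊆ σ'.T ∪ σ'.F := by
        intro σ' hσ' f hf
        obtain ⟨hOK', hT', hF', hnew⟩ := hσ'
        by_cases hfo : f ∈ σ.T ∪ σ.F
        · rcases Finset.mem_union.1 hfo with h | h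
          · exact Finset.mem_union_left _ (hT' h)
          · exact Finset.mem_union_right _ (hF' h)
        · have hmem : f ∈ (σ'.T \ σ.T) ∪ (σ'.F \ σ.F) := by
            rw [hnew]; exact Finset.mem_sdiff.2 ⟨hf, hfo⟩
          rcases Finset.mem_union.1 hmem with h | h
          · exact Finset.mem_union_left _ (Finset.mem_sdiff.1 h).1
          · exact Finset.mem_union_right _ (Finset.mem_sdiff.1 h).1
      have hmatch : ∀ σ' ∈ sres a σ, ∃ cb ∈ bs,
          (Rform cb.1 (r cb)).T ∩ X = σ'.T ∩ X ∧ (Rform cb.1 (r cb)).F ∩ X = σ'.F ∩ X := by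
        intro σ' hσ'
        have hk := hsresKnown σ' hσ'
        have hOK' : σ'.OK := hσ'.1
        have hPQdis : Disjoint (σ'.T ∩ X) (σ'.F ∩ X) :=
          hOK'.mono Finset.inter_subset_left Finset.inter_subset_left
        have hPQun : (σ'.T ∩ X) ∪ (σ'.F ∩ X) = X := by
          apply Finset.Subset.antisymm
          · exact Finset.union_subset Finset.inter_subset_right Finset.inter_subset_right
          · intro f hf
            rcases Finset.mem_union.1 (hk (hXsens hf)) with h | h
            · exact Finset.mem_union_left _ (Finset.mem_inter.2 ⟨h, hf⟩)
            · exact Finset.mem_union_right _ (Finset.mem_inter.2 ⟨h, hf⟩)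
        obtain ⟨ds, ⟨hdsmem, hdsT, hdsF⟩, _⟩ := hEO (σ'.T ∩ X) (σ'.F ∩ X) hPQdis hPQun
        obtain ⟨d, hdΔ, rfl⟩ := Finset.mem_image.1 hdsmem
        obtain ⟨cb, hcb, rfl⟩ := List.mem_map.1 (List.mem_toFinset.1 hdΔ)
        refine ⟨cb, hcb, ?_, ?_⟩
        · have hdT : (Rform cb.1 (r cb)).T ∩ X ⊆ σ'.T ∩ X := by
            intro f hf
            rw [← hdsT]
            exact Finset.mem_inter.2 ⟨(hpe _ hdΔ).1 (Finset.mem_inter.1 hf).1,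
              (Finset.mem_inter.1 hf).2⟩
          have hdF : (Rform cb.1 (r cb)).F ∩ X ⊆ σ'.F ∩ X := by
            intro f hf
            rw [← hdsF]
            exact Finset.mem_inter.2 ⟨(hpe _ hdΔ).2 (Finset.mem_inter.1 hf).1,
              (Finset.mem_inter.1 hf).2⟩
          apply Finset.Subset.antisymm hdT
          intro f hf
          have hfX : f ∈ X := (Finset.mem_inter.1 hf).2
          rcases Finset.mem_union.1 (hknown _ hdΔ (hXsens hfX)) with h | h
          · exact Finset.mem_inter.2 ⟨h, hfX⟩
          · exfalso
            have hmem2 : f ∈ σ'.F ∩ X := hdF (Finset.mem_inter.2 ⟨h, hfX⟩)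
            exact Finset.disjoint_left.1 hOK' (Finset.mem_inter.1 hf).1
              (Finset.mem_inter.1 hmem2).1
        · have hdT : (Rform cb.1 (r cb)).T ∩ X ⊆ σ'.T ∩ X := by
            intro f hf
            rw [← hdsT]
            exact Finset.mem_inter.2 ⟨(hpe _ hdΔ).1 (Finset.mem_inter.1 hf).1,
              (Finset.mem_inter.1 hf).2⟩
          have hdF : (Rform cb.1 (r cb)).F ∩ X ⊆ σ'.F ∩ X := by
            intro f hf
            rw [← hdsF]
            exact Finset.mem_inter.2 ⟨(hpe _ hdΔ).2 (Finset.mem_inter.1 hf).1,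
              (Finset.mem_inter.1 hf).2⟩
          apply Finset.Subset.antisymm hdF
          intro f hf
          have hfX : f ∈ X := (Finset.mem_inter.1 hf).2
          rcases Finset.mem_union.1 (hknown _ hdΔ (hXsens hfX)) with h | h
          · exfalso
            have hmem2 : f ∈ σ'.T ∩ X := hdT (Finset.mem_inter.2 ⟨h, hfX⟩)
            exact Finset.disjoint_left.1 hOK' (Finset.mem_inter.1 hmem2).1
              (Finset.mem_inter.1 hf).1
          · exact Finset.mem_inter.2 ⟨h, hfX⟩
      have hext1 : ∀ σ' ∈ sres a σ, ∀ cb ∈ bs,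
          (Rform cb.1 (r cb)).T ∩ X = σ'.T ∩ X → (Rform cb.1 (r cb)).F ∩ X = σ'.F ∩ X →
          (Rform cb.1 (r cb)).T ⊆ σ'.T ∧ (Rform cb.1 (r cb)).F ⊆ σ'.F := by
        intro σ' hσ' cb hcb hTeq hFeq
        constructor
        · intro f hf
          by_cases hfX : f ∈ X
          · have hmem2 : f ∈ σ'.T ∩ X := hTeq ▸ Finset.mem_inter.2 ⟨hf, hfX⟩
            exact (Finset.mem_inter.1 hmem2).1
          · exact hσ'.2.1 (hsupT cb hcb hf hfX)
        · intro f hf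
          by_cases hfX : f ∈ X
          · have hmem2 : f ∈ σ'.F ∩ X := hFeq ▸ Finset.mem_inter.2 ⟨hf, hfX⟩
            exact (Finset.mem_inter.1 hmem2).1
          · exact hσ'.2.2.1 (hsupF cb hcb hf hfX)
      have hcover : ∀ σ' ∈ sres a σ, ∃ cb ∈ bs, holds cb.1 σ' := by
        intro σ' hσ'
        obtain ⟨cb, hcb, hTeq, hFeq⟩ := hmatch σ' hσ'
        obtain ⟨hs1, hs2⟩ := hext1 σ' hσ' cb hcb hTeq hFeq
        exact ⟨cb, hcb, (Finset.subset_union_right).trans hs1,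
          (Finset.subset_union_right).trans hs2⟩
      have hwfb : ∀ b ∈ bs, b.2.WF := by
        cases hwf with | pcase _ _ _ _ h => exact h
      have hpair : bs.Pairwise (fun b b' => MutEx b.1 b'.1) := by
        cases hwf with | pcase _ _ _ h _ => exact h
      have hmutex : ∀ b ∈ bs, ∀ c' ∈ bs, b ≠ c' → MutEx b.1 c'.1 :=
        fun b hb c' hc' hne =>
          haveI : Std.Symm (fun b b' : Form V × Plan V => MutEx b.1 b'.1) := ⟨fun _ _ h => Or.symm h⟩
          List.Pairwise.forall hpair hb hc' hne
      have hbranch : ∀ σ' ∈ sres a σ, ∀ b ∈ bs, holds b.1 σ' →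
          (Rform b.1 (r b)).T ⊆ σ'.T ∧ (Rform b.1 (r b)).F ⊆ σ'.F := by
        intro σ' hσ' b hb hh
        obtain ⟨cb, hcb, hTeq, hFeq⟩ := hmatch σ' hσ'
        by_cases hbc : Rform b.1 (r b) = Rform cb.1 (r cb)
        · rw [hbc]; exact hext1 σ' hσ' cb hcb hTeq hFeq
        · exfalso
          have hne : b ≠ cb := fun h => hbc (by rw [h])
          have hcex := hext1 σ' hσ' cb hcb hTeq hFeq
          rcases hmutex b hb cb hcb hne with h | h
          · obtain ⟨g, hg1, hg2⟩ := Finset.not_disjoint_iff.1 h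
            have hgT : g ∈ σ'.T := hh.1 hg1
            have hgF : g ∈ σ'.F := hcex.2 (Finset.mem_union_right _ hg2)
            exact Finset.disjoint_left.1 hσ'.1 hgT hgF
          · obtain ⟨g, hg1, hg2⟩ := Finset.not_disjoint_iff.1 h
            have hgT : g ∈ σ'.T := hcex.1 (Finset.mem_union_right _ hg1)
            have hgF : g ∈ σ'.F := hh.2 hg2
            exact Finset.disjoint_left.1 hσ'.1 hgT hgF
      cases hx
      · rename_i hn
        rcases hn with ⟨_, _, _, hc⟩ | ⟨hne, _⟩
        · exact absurd hc (by simp)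
        · exact absurd hexec hne
      · rename_i σ' φ p hholds hbin hmem hrun
        have hσ' : σ' ∈ sres a σ := by
          rcases hmem with ⟨_, σ'', hσ'', heq⟩ | ⟨_, heq⟩
          · cases heq; exact hσ''
          · exact absurd heq (by simp)
        obtain ⟨hrT, hrF⟩ := hbranch σ' hσ' (φ, p) hbin hholds
        have hσ'ext : σ' ∈ exts (r (φ, p)) :=
          ⟨hσ'.1, (Finset.subset_union_left).trans hrT,
            (Finset.subset_union_left).trans hrF⟩
        exact ih (φ, p) hbin (hwfb (φ, p) hbin) δ (r (φ, p)) rfl rfl σ' hσ'ext _ hrun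
      · rename_i σ' hnone hmem
        have hσ' : σ' ∈ sres a σ := by
          rcases hmem with ⟨_, σ'', hσ'', heq⟩ | ⟨_, heq⟩
          · cases heq; exact hσ''
          · exact absurd heq (by simp)
        obtain ⟨cb, hcb, hholds⟩ := hcover σ' hσ'
        exact absurd hholds (hnone cb hcb)
  | seq c₁ c₂ δ y xo h₂ h₁ ih₂ ih₁ =>
      intro hwf δG δf hi ho σ hσ x' hx
      cases hi; cases ho
      cases y with
      | none => cases h₁
      | some δm =>
        cases hwf with
        | seq hw1 hw2 =>
          cases hx
          rename_i y' hp1 hp2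
          obtain ⟨σm, hσm, rfl⟩ := ih₁ hw1 δm δf rfl rfl σ hσ y' hp1
          exact ih₂ hw2 _ δm rfl rfl σm hσm x' hp2

/-- soundness of regression.  A regression solution (a conditional
plan `c` with `Regress*(c,δ_G) = δ ≠ ⊥` and `σ_I ∈ ext(δ)`) is a progression
solution: `⊥ ∉ Φ*(c,σ_I)` and `Φ*(c,σ_I) ⊆ ext(δ_G)`. -/
theorem regression_soundness
    (σI δG : St V) (hI : σI.OK) (hG : δG.OK)
    (c : Plan V) (hwf : c.WF)
    (δ : St V) (hreg : RegStarR c (some δG) (some δ)) (hin : σI ∈ exts δ) :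
    ¬ PhiStarR c (some σI) none ∧
    ∀ x, PhiStarR c (some σI) x → ∃ σ' ∈ exts δG, x = some σ' := by
  have h := regStarR_sound hreg hwf δG δ rfl rfl σI hin
  refine ⟨fun hn => ?_, h⟩
  obtain ⟨σ', _, heq⟩ := h none hn
  exact nomatch heq
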